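/- arXiv:2409.19263 — 3 statements merged into one kernel-verified Lean document; each statement's English description precedes it below -/
import Mathlib

section
/- Let E = {0,1} with irreducible 0-1 incidence matrix A having spectral radius r(A) > 1, and suppose the deterministic counting function satisfies C·r(A)^n ≤ N_ρ(−n log α) ≤ D·r(A)^n for all large n and some constants C, D > 0. In the random system with Z = {z,w}, 0 < z < w < 1, Bernoulli weights p, q = 1−p ∈ (0,1), set δ_Λ := −log r(A)/(log α + p log z + q log w). If along a subsequence n_i one has s_{n_i,z}(λ) − p n_i ∈ [m−1, m] for a fixed integer m, then C' (z/w)^{δ_Λ m} ≤ N_ρ^λ(T_i)/exp(δ_Λ T_i) ≤ D' (z/w)^{δ_Λ m} for all large i, where C' = C·w^{δ_Λ}, D' = D·z^{−δ_Λ}, and T_i = −S_{n_i}F(ωρ,λ). -/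
open Filter Real

/-- window pinching. With `δ_Λ = −log r(A)/(log α + p log z + q log w)`,
deterministic counting `C r(A)^n ≤ N_ρ(−n log α) ≤ D r(A)^n` for large `n`, and a
subsequence `n_i` with `s_{n_i,z}(λ) − p n_i ∈ [m−1, m]`, one has
`C w^{δ_Λ} (z/w)^{δ_Λ m} ≤ N_ρ^λ(T_i)/exp(δ_Λ T_i) ≤ D z^{−δ_Λ} (z/w)^{δ_Λ m}`
for all large `i`, where `T_i = −S_{n_i}F(ωρ,λ)`. -/
theorem window_pinching (r : ℝ) (hr : 1 < r) (C D : ℝ) (hC : 0 < C) (hD : 0 < D)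
    (α z w p q : ℝ) (hα : 0 < α ∧ α < 1) (hz : 0 < z) (hzw : z < w) (hw : w < 1)
    (hp : 0 < p ∧ p < 1) (hq : q = 1 - p)
    (δΛ : ℝ) (hδΛ : δΛ = -Real.log r / (Real.log α + p * Real.log z + q * Real.log w))
    (Ndet : ℕ → ℝ)
    (hdet : ∀ᶠ n in atTop, C * r ^ n ≤ Ndet n ∧ Ndet n ≤ D * r ^ n)
    (s : ℕ → ℕ) (hs : ∀ n, s n ≤ n)
    (T : ℕ → ℝ)
    (hT : ∀ n, T n = -((n : ℝ) * Real.log α + (s n : ℝ) * Real.log z +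
      ((n : ℝ) - (s n : ℝ)) * Real.log w))
    (Nrand : ℝ → ℝ) (hNrand : ∀ n, Nrand (T n) = Ndet n)
    (ni : ℕ → ℕ) (hni : StrictMono ni)
    (m : ℤ)
    (hwin : ∀ i, (m : ℝ) - 1 ≤ (s (ni i) : ℝ) - p * (ni i : ℝ) ∧
      (s (ni i) : ℝ) - p * (ni i : ℝ) ≤ (m : ℝ)) :
    ∀ᶠ i in atTop,
      C * w ^ δΛ * (z / w) ^ (δΛ * (m : ℝ)) ≤ Nrand (T (ni i)) / Real.exp (δΛ * T (ni i)) ∧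
      Nrand (T (ni i)) / Real.exp (δΛ * T (ni i)) ≤
        D * z ^ (-δΛ) * (z / w) ^ (δΛ * (m : ℝ)) := by
  obtain ⟨hα0, hα1⟩ := hα
  obtain ⟨hp0, hp1⟩ := hp
  have hw0 : 0 < w := lt_trans hz hzw
  have hz1 : z < 1 := hzw.trans hw
  have hlogα : Real.log α < 0 := Real.log_neg hα0 hα1
  have hlogz : Real.log z < 0 := Real.log_neg hz hz1
  have hlogw : Real.log w < 0 := Real.log_neg hw0 hw
  have hq0 : 0 < q := by rw [hq]; linarith
  set L : ℝ := Real.log α + p * Real.log z + q * Real.log w with hL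
  have hLneg : L < 0 := by
    have h1 := mul_neg_of_pos_of_neg hp0 hlogz
    have h2 := mul_neg_of_pos_of_neg hq0 hlogw
    simp only [hL]; linarith
  have hlogr : 0 < Real.log r := Real.log_pos hr
  have hδpos : 0 < δΛ := by
    rw [hδΛ]; exact div_pos_of_neg_of_neg (by linarith) hLneg
  have hδL : δΛ * L = -Real.log r := by
    rw [hδΛ, div_mul_cancel₀ _ hLneg.ne]
  set B : ℝ := z / w with hB
  have hB0 : 0 < B := div_pos hz hw0
  have hB1 : B < 1 := (div_lt_one hw0).mpr hzw
  have hlogB : Real.log B = Real.log z - Real.log w := Real.log_div hz.ne' hw0.ne'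
  have key : ∀ n : ℕ, δΛ * T n = (n : ℝ) * Real.log r - (δΛ * ((s n : ℝ) - p * n)) * Real.log B := by
    intro n
    rw [hT n, hlogB]
    have h : (δΛ : ℝ) * L * (n : ℝ) = -Real.log r * n := by rw [hδL]
    simp only [hL, hq] at h ⊢
    linear_combination -h
  have hexp : ∀ n : ℕ, Real.exp (δΛ * T n)
      = r ^ n * B ^ (-(δΛ * ((s n : ℝ) - p * n))) := by
    intro n
    have h1 : δΛ * T n = (n : ℝ) * Real.log r
        + Real.log B * (-(δΛ * ((s n : ℝ) - p * n))) := by rw [key n]; ring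
    rw [h1, Real.exp_add, Real.rpow_def_of_pos hB0]
    congr 1
    rw [← Real.log_pow, Real.exp_log (pow_pos (by linarith : (0:ℝ) < r) n)]
  filter_upwards [hni.tendsto_atTop.eventually hdet] with i hi
  obtain ⟨hi1, hi2⟩ := hi
  set n := ni i with hn
  set t : ℝ := (s n : ℝ) - p * n with ht
  obtain ⟨hw1, hw2⟩ := hwin i
  have hrn : (0:ℝ) < r ^ n := pow_pos (by linarith) n
  have hBpos : ∀ y : ℝ, 0 < B ^ y := fun y => Real.rpow_pos_of_pos hB0 y
  have hratio : Nrand (T n) / Real.exp (δΛ * T n) = (Ndet n / r ^ n) * B ^ (δΛ * t) := by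
    rw [hNrand, hexp, Real.rpow_neg hB0.le]
    field_simp
    rfl
  rw [hratio]
  have hBmono : B ^ (δΛ * (m : ℝ)) ≤ B ^ (δΛ * t) :=
    Real.rpow_le_rpow_of_exponent_ge hB0 hB1.le (by nlinarith)
  have hBmono2 : B ^ (δΛ * t) ≤ B ^ (δΛ * ((m : ℝ) - 1)) :=
    Real.rpow_le_rpow_of_exponent_ge hB0 hB1.le (by nlinarith)
  have hCn : C ≤ Ndet n / r ^ n := (le_div_iff₀ hrn).mpr (by simpa [mul_comm] using hi1)
  have hDn : Ndet n / r ^ n ≤ D := (div_le_iff₀ hrn).mpr (by simpa [mul_comm] using hi2)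
  constructor
  · have hwδ : w ^ δΛ ≤ 1 := Real.rpow_le_one hw0.le hw.le hδpos.le
    have h1 : C * w ^ δΛ * B ^ (δΛ * (m : ℝ)) ≤ C * B ^ (δΛ * (m : ℝ)) :=
      mul_le_mul_of_nonneg_right
        ((mul_le_mul_of_nonneg_left hwδ hC.le).trans_eq (mul_one C)) (hBpos _).le
    exact h1.trans (mul_le_mul hCn hBmono (hBpos _).le (hC.le.trans hCn))
  · have hsplit : B ^ (δΛ * ((m : ℝ) - 1)) = B ^ (δΛ * (m : ℝ)) * B ^ (-δΛ) := by
      rw [← Real.rpow_add hB0]; ring_nf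
    have hBneg : B ^ (-δΛ) ≤ z ^ (-δΛ) := by
      have h1 : B ^ (-δΛ) = (w / z) ^ δΛ := by
        rw [Real.rpow_neg hB0.le, ← Real.inv_rpow hB0.le, hB, inv_div]
      have h2 : z ^ (-δΛ) = (z⁻¹) ^ δΛ := by
        rw [Real.rpow_neg hz.le, ← Real.inv_rpow hz.le]
      rw [h1, h2]
      refine Real.rpow_le_rpow (by positivity) ?_ hδpos.le
      rw [div_le_iff₀ hz, inv_mul_cancel₀ hz.ne']
      exact hw.le
    have hzneg : 0 < z ^ (-δΛ) := Real.rpow_pos_of_pos hz _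
    have h3 : (Ndet n / r ^ n) * B ^ (δΛ * t) ≤ D * B ^ (δΛ * ((m : ℝ) - 1)) :=
      mul_le_mul hDn hBmono2 (hBpos _).le hD.le
    refine h3.trans ?_
    rw [hsplit]
    calc D * (B ^ (δΛ * (m : ℝ)) * B ^ (-δΛ))
        = D * B ^ (-δΛ) * B ^ (δΛ * (m : ℝ)) := by ring
      _ ≤ D * z ^ (-δΛ) * B ^ (δΛ * (m : ℝ)) :=
        mul_le_mul_of_nonneg_right (mul_le_mul_of_nonneg_left hBneg hD.le) (hBpos _).le
end

section
/- Under the assumptions of the previous statement, if the random walk s_{n,z}(λ) − n p takes every integer-window value [m−1, m] infinitely often for every integer m (fluctuation property, true for ν-a.e. λ by the law of the iterated logarithm), then liminf_{T→∞} N_ρ^λ(T)/exp(δ_Λ T) = 0 and limsup_{T→∞} N_ρ^λ(T)/exp(δ_Λ T) = ∞. -/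
open Filter
open scoped ENNReal NNReal

/-- if for every integer window `m` the ratio `N_ρ^λ(T)/exp(δ_Λ T)` is
pinched between `C'(z/w)^{δ_Λ m}` and `D'(z/w)^{δ_Λ m}` along arbitrarily large times
(the fluctuation property of the random walk), then
`liminf N_ρ^λ(T)/exp(δ_Λ T) = 0` and `limsup N_ρ^λ(T)/exp(δ_Λ T) = ∞`. -/
theorem liminf_zero_limsup_top (z w δΛ : ℝ) (hz : 0 < z) (hzw : z < w) (hδΛ : 0 < δΛ)
    (Nrand : ℝ → ℝ) (hN0 : ∀ T, 0 ≤ Nrand T)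
    (C' D' : ℝ) (hC' : 0 < C') (hD' : 0 < D')
    (hwin : ∀ m : ℤ, ∀ M : ℝ, ∃ T ≥ M,
      C' * (z / w) ^ (δΛ * (m : ℝ)) ≤ Nrand T / Real.exp (δΛ * T) ∧
      Nrand T / Real.exp (δΛ * T) ≤ D' * (z / w) ^ (δΛ * (m : ℝ))) :
    liminf (fun T => ENNReal.ofReal (Nrand T / Real.exp (δΛ * T))) atTop = 0 ∧
      limsup (fun T => ENNReal.ofReal (Nrand T / Real.exp (δΛ * T))) atTop = ⊤ := by
  have hw : 0 < w := hz.trans hzw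
  have hq0 : 0 < z / w := div_pos hz hw
  have hq1 : z / w < 1 := (div_lt_one hw).mpr hzw
  set r := (z / w) ^ δΛ with hrdef
  have hr0 : 0 < r := Real.rpow_pos_of_pos hq0 _
  have hr1 : r < 1 := Real.rpow_lt_one hq0.le hq1 hδΛ
  have hkey : ∀ m : ℤ, (z / w) ^ (δΛ * (m : ℝ)) = r ^ m := by
    intro m
    rw [Real.rpow_mul hq0.le, ← Real.rpow_intCast ((z / w) ^ δΛ) m]
  have hfreq : ∀ m : ℤ, ∃ᶠ T in atTop,
      C' * r ^ m ≤ Nrand T / Real.exp (δΛ * T) ∧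
      Nrand T / Real.exp (δΛ * T) ≤ D' * r ^ m := by
    intro m
    rw [frequently_atTop]
    intro M
    obtain ⟨T, hT, h1, h2⟩ := hwin m M
    exact ⟨T, hT, by rwa [hkey m] at h1, by rwa [hkey m] at h2⟩
  constructor
  · refine le_antisymm ?_ zero_le
    refine ENNReal.le_of_forall_pos_le_add fun ε hε _ => ?_
    rw [zero_add]
    have htend : Tendsto (fun n : ℕ => D' * r ^ n) atTop (nhds 0) := by
      have := tendsto_pow_atTop_nhds_zero_of_lt_one hr0.le hr1
      simpa using this.const_mul D'
    have hev : ∀ᶠ n : ℕ in atTop, D' * r ^ n < (ε : ℝ) := by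
      have : (0 : ℝ) < ε := hε
      exact htend.eventually (eventually_lt_nhds this)
    obtain ⟨n, hn⟩ := hev.exists
    have hle : liminf (fun T => ENNReal.ofReal (Nrand T / Real.exp (δΛ * T))) atTop
        ≤ ENNReal.ofReal (D' * r ^ (n : ℤ)) :=
      liminf_le_of_frequently_le'
        ((hfreq n).mono fun T hT => ENNReal.ofReal_le_ofReal hT.2)
    refine hle.trans (le_of_lt ?_)
    rw [zpow_natCast]
    calc ENNReal.ofReal (D' * r ^ n) < ENNReal.ofReal (ε : ℝ) :=
          (ENNReal.ofReal_lt_ofReal_iff (by exact_mod_cast hε)).mpr hn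
      _ = (ε : ℝ≥0∞) := ENNReal.ofReal_coe_nnreal
  · refine ENNReal.eq_top_of_forall_nnreal_le fun R => ?_
    have hinv : 1 < r⁻¹ := one_lt_inv_iff₀.mpr ⟨hr0, hr1⟩
    have htend : Tendsto (fun n : ℕ => C' * r⁻¹ ^ n) atTop atTop :=
      (tendsto_pow_atTop_atTop_of_one_lt hinv).const_mul_atTop hC'
    obtain ⟨n, hn⟩ := (htend.eventually_ge_atTop (R : ℝ)).exists
    have hz : r ^ (-(n : ℤ)) = r⁻¹ ^ n := by
      rw [zpow_neg, zpow_natCast, inv_pow]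
    refine le_limsup_of_frequently_le' ?_
    refine (hfreq (-(n : ℤ))).mono fun T hT => ?_
    calc (R : ℝ≥0∞) = ENNReal.ofReal (R : ℝ) := ENNReal.ofReal_coe_nnreal.symm
      _ ≤ ENNReal.ofReal (Nrand T / Real.exp (δΛ * T)) := by
          apply ENNReal.ofReal_le_ofReal
          refine le_trans hn (le_trans ?_ hT.1)
          rw [hz]
end

section
/- Let θ(s) = 1 − (R^s/2^s + R^s/3^s)^m where R ∈ (0,1) satisfies that log(2/3)/log(R/2) is irrational. Then every zero of θ in ℂ is simple, i.e. θ(s) = 0 implies θ'(s) ≠ 0. -/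
noncomputable section

/-- `θ(s) = 1 − ((R/2)^s + (R/3)^s)^m`, with principal complex powers of the
positive real bases `R/2` and `R/3`. -/
def theta (R : ℝ) (m : ℕ) (s : ℂ) : ℂ :=
  1 - (((R / 2 : ℝ) : ℂ) ^ s + ((R / 3 : ℝ) : ℂ) ^ s) ^ m

/-- if `0 < R < 1` and `log(2/3)/log(R/2)` is irrational, then every
zero of `θ` is simple: `θ(s) = 0 → θ'(s) ≠ 0`. -/
theorem theta_zeros_simple (R : ℝ) (hR : 0 < R ∧ R < 1) (m : ℕ) (hm : 1 ≤ m)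
    (hirr : Irrational (Real.log (2 / 3) / Real.log (R / 2))) (s : ℂ)
    (hzero : theta R m s = 0) : deriv (theta R m) s ≠ 0 := by
  obtain ⟨hR0, hR1⟩ := hR
  set a : ℝ := R / 2 with ha_def
  set b : ℝ := R / 3 with hb_def
  have ha0 : (0:ℝ) < a := by positivity
  have hb0 : (0:ℝ) < b := by positivity
  have ha1 : a < 1 := by rw [ha_def]; linarith
  have hb1 : b < 1 := by rw [hb_def]; linarith
  set La : ℝ := Real.log a with hLa_def
  set Lb : ℝ := Real.log b with hLb_def
  have hLa : La < 0 := Real.log_neg ha0 ha1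
  have hLb : Lb < 0 := Real.log_neg hb0 hb1
  have hLa0 : La ≠ 0 := ne_of_lt hLa
  have hLb0 : Lb ≠ 0 := ne_of_lt hLb
  have hab : a ≠ b := by
    rw [ha_def, hb_def]; intro h; field_simp at h; linarith
  have hLab : La ≠ Lb := by
    intro h
    apply hab
    rw [← Real.exp_log ha0, ← Real.exp_log hb0, ← hLa_def, ← hLb_def, h]
  set c : ℝ := La - Lb with hc_def
  have hc0 : c ≠ 0 := sub_ne_zero.mpr hLab
  -- rewrite cpow as exp
  have haC : ((a:ℂ)) ≠ 0 := Complex.ofReal_ne_zero.mpr ha0.ne'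
  have hbC : ((b:ℂ)) ≠ 0 := Complex.ofReal_ne_zero.mpr hb0.ne'
  have hAe : ((a:ℂ)) ^ s = Complex.exp ((La:ℂ) * s) := by
    rw [Complex.cpow_def_of_ne_zero haC, hLa_def, Complex.ofReal_log ha0.le]
  have hBe : ((b:ℂ)) ^ s = Complex.exp ((Lb:ℂ) * s) := by
    rw [Complex.cpow_def_of_ne_zero hbC, hLb_def, Complex.ofReal_log hb0.le]
  set A : ℂ := Complex.exp ((La:ℂ) * s) with hA_def
  set B : ℂ := Complex.exp ((Lb:ℂ) * s) with hB_def
  set F : ℂ := ((a:ℂ)) ^ s + ((b:ℂ)) ^ s with hF_def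
  -- the zero hypothesis
  have hFm : F ^ m = 1 := by
    have : (1:ℂ) - F ^ m = 0 := hzero
    linear_combination -this
  have hF0 : F ≠ 0 := by
    intro h
    rw [h, zero_pow (by omega : m ≠ 0)] at hFm
    exact one_ne_zero hFm.symm
  -- derivative computation
  have hdA : HasDerivAt (fun z : ℂ => ((a:ℂ)) ^ z) (((a:ℂ)) ^ s * Complex.log a) s :=
    (Complex.hasStrictDerivAt_const_cpow (Or.inl haC)).hasDerivAt
  have hdB : HasDerivAt (fun z : ℂ => ((b:ℂ)) ^ z) (((b:ℂ)) ^ s * Complex.log b) s :=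
    (Complex.hasStrictDerivAt_const_cpow (Or.inl hbC)).hasDerivAt
  have hdF : HasDerivAt (fun z : ℂ => ((a:ℂ)) ^ z + ((b:ℂ)) ^ z)
      (((a:ℂ)) ^ s * Complex.log a + ((b:ℂ)) ^ s * Complex.log b) s := hdA.add hdB
  have hdθ : HasDerivAt (theta R m)
      (-((m:ℂ) * F ^ (m - 1) * (((a:ℂ)) ^ s * Complex.log a + ((b:ℂ)) ^ s * Complex.log b))) s := by
    have := (hdF.pow m).const_sub (1:ℂ)
    exact this
  rw [hdθ.deriv]
  intro hD0
  -- from the vanishing derivative, get the linear relation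
  have hm0 : (m:ℂ) ≠ 0 := Nat.cast_ne_zero.mpr (by omega)
  have hFpow : F ^ (m - 1) ≠ 0 := pow_ne_zero _ hF0
  have hD : A * (La:ℂ) + B * (Lb:ℂ) = 0 := by
    have h1 : ((a:ℂ)) ^ s * Complex.log a + ((b:ℂ)) ^ s * Complex.log b = 0 := by
      have h := neg_eq_zero.mp hD0
      rcases mul_eq_zero.mp h with h' | h'
      · rcases mul_eq_zero.mp h' with h'' | h''
        · exact absurd h'' hm0
        · exact absurd h'' hFpow
      · exact h'
    rw [hAe, hBe, ← Complex.ofReal_log ha0.le, ← Complex.ofReal_log hb0.le] at h1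
    exact h1
  -- the ratio is a negative real
  set X : ℂ := Complex.exp (((c:ℝ):ℂ) * s) with hX_def
  have hexp : X * B = A := by
    rw [hX_def, hA_def, hB_def, ← Complex.exp_add]
    congr 1
    push_cast [hc_def]
    ring
  have hX : X * (La:ℂ) + (Lb:ℂ) = 0 := by
    have hBne : B ≠ 0 := Complex.exp_ne_zero _
    apply mul_left_cancel₀ hBne
    rw [mul_zero]
    linear_combination hD + (La:ℂ) * hexp
  set β : ℝ := -Lb / La with hβ_def
  have hβneg : β < 0 := by
    rw [hβ_def]
    apply div_neg_of_pos_of_neg (by linarith) hLa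
  have hLaC : ((La:ℝ):ℂ) ≠ 0 := Complex.ofReal_ne_zero.mpr hLa0
  have hXval : X = ((β:ℝ):ℂ) := by
    rw [hβ_def]
    push_cast
    rw [eq_div_iff hLaC]
    linear_combination hX
  -- imaginary part of exponent is a multiple of π
  set t : ℝ := s.im with ht_def
  have hwim : (((c:ℝ):ℂ) * s).im = c * t := by
    rw [ht_def]
    simp [Complex.mul_im]
  have hXim : X.im = 0 := by rw [hXval]; simp
  have hsin1 : Real.sin (c * t) = 0 := by
    have h := Complex.exp_im (((c:ℝ):ℂ) * s)
    rw [← hX_def, hXim, hwim] at h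
    rcases mul_eq_zero.mp h.symm with h' | h'
    · exact absurd h' (Real.exp_ne_zero _)
    · exact h'
  obtain ⟨k, hk⟩ := Real.sin_eq_zero_iff.mp hsin1
  have hXre : X.re = β := by rw [hXval]; exact Complex.ofReal_re β
  have hcos1 : Real.cos (c * t) < 0 := by
    have h := Complex.exp_re (((c:ℝ):ℂ) * s)
    rw [← hX_def, hXre, hwim] at h
    have hpos := Real.exp_pos ((((c:ℝ):ℂ) * s).re)
    nlinarith [hβneg]
  have hct0 : c * t ≠ 0 := by
    intro h
    rw [h, Real.cos_zero] at hcos1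
    linarith
  have ht0 : t ≠ 0 := fun h => hct0 (by rw [h, mul_zero])
  -- second condition: A^m is real
  have hβ0 : β ≠ 0 := ne_of_lt hβneg
  have hβ1 : β + 1 ≠ 0 := by
    rw [hβ_def]
    intro h
    apply hc0
    have : -Lb + La = 0 := by
      field_simp at h
      linarith
    rw [hc_def]; linarith
  set γ : ℝ := (β + 1) / β with hγ_def
  have hγ0 : γ ≠ 0 := div_ne_zero hβ1 hβ0
  have hβC : ((β:ℝ):ℂ) ≠ 0 := Complex.ofReal_ne_zero.mpr hβ0
  have hB2 : B * ((β:ℝ):ℂ) = A := by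
    rw [← hXval]
    linear_combination hexp
  have hFAB : F = A * ((γ:ℝ):ℂ) := by
    rw [hF_def, hAe, hBe, hγ_def]
    push_cast
    rw [mul_div_assoc', eq_div_iff hβC]
    linear_combination hB2
  have hAm' : A ^ m * (((γ:ℝ):ℂ)) ^ m = 1 := by
    rw [← mul_pow, ← hFAB]
    exact hFm
  have hAm2 : A ^ m = ((((γ ^ m)⁻¹ : ℝ)):ℂ) := by
    have hγC : (((γ:ℝ):ℂ)) ^ m ≠ 0 := pow_ne_zero _ (Complex.ofReal_ne_zero.mpr hγ0)
    push_cast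
    rw [inv_eq_one_div, eq_div_iff hγC]
    exact hAm'
  have hAmexp : A ^ m = Complex.exp (((m * La : ℝ):ℂ) * s) := by
    rw [hA_def, ← Complex.exp_nat_mul]
    congr 1
    push_cast
    ring
  have hAmim : (A ^ m).im = 0 := by
    rw [hAm2]
    exact Complex.ofReal_im _
  have hsin2 : Real.sin (m * La * t) = 0 := by
    have h := Complex.exp_im ((((m * La : ℝ)):ℂ) * s)
    rw [← hAmexp, hAmim] at h
    have h2 : ((((m * La : ℝ)):ℂ) * s).im = m * La * t := by
      rw [ht_def]
      simp [Complex.mul_im]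
    rw [h2] at h
    rcases mul_eq_zero.mp h.symm with h' | h'
    · exact absurd h' (Real.exp_ne_zero _)
    · exact h'
  obtain ⟨l, hl⟩ := Real.sin_eq_zero_iff.mp hsin2
  have hl0 : (l:ℝ) ≠ 0 := by
    intro h
    rw [h, zero_mul] at hl
    have : (m:ℝ) * La * t ≠ 0 := by
      apply mul_ne_zero (mul_ne_zero _ hLa0) ht0
      exact Nat.cast_ne_zero.mpr (by omega)
    exact this hl.symm
  -- derive rationality, contradiction
  have htπ : t * Real.pi ≠ 0 := mul_ne_zero ht0 Real.pi_ne_zero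
  have hc23 : Real.log (2 / 3) = -c := by
    have h1 : c = Real.log (a / b) := by
      rw [hc_def, hLa_def, hLb_def, Real.log_div ha0.ne' hb0.ne']
    have h2 : a / b = 3 / 2 := by
      rw [ha_def, hb_def]
      field_simp
    rw [h1, h2]
    rw [show (2:ℝ)/3 = (3/2)⁻¹ by norm_num, Real.log_inv]
  have key : ((-c) * l) * (t * Real.pi) = ((-(k:ℝ) * m) * La) * (t * Real.pi) := by
    linear_combination ((l:ℝ) * Real.pi) * hk - ((k:ℝ) * Real.pi) * hl
  have key2 : (-c) * l = (-(k:ℝ) * m) * La := mul_right_cancel₀ htπ key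
  apply hirr
  refine ⟨((-(k * (m:ℤ)) : ℤ) : ℚ) / ((l : ℤ) : ℚ), ?_⟩
  rw [hc23]
  push_cast
  rw [div_eq_div_iff hl0 hLa0]
  linear_combination -key2
end
end
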